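/- Let α : [0,∞) → [0,∞) be continuous and positive definite (α(r) > 0 for r > 0, α(0) = 0). Then there exists β ∈ KL such that for every continuous function y : [0,∞) → [0,∞) whose right-hand lower Dini derivative satisfies D₊y(t) ≤ −α(y(t)) for all t > 0, one has y(t) ≤ β(y(0), t) for all t ≥ 0. -/

import Mathlib

open Filter Set

/-- Class `K` comparison functions on `[0,∞)`. -/
def ClassK (f : ℝ → ℝ) : Prop :=
  ContinuousOn f (Ici 0) ∧ StrictMonoOn f (Ici 0) ∧ f 0 = 0 ∧ ∀ r, 0 ≤ r → 0 ≤ f r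

/-- Class `K∞` comparison functions. -/
def ClassKInf (f : ℝ → ℝ) : Prop :=
  ClassK f ∧ ∀ M : ℝ, ∃ r, 0 ≤ r ∧ M < f r

/-- Class `KL` comparison functions. -/
def ClassKL (β : ℝ → ℝ → ℝ) : Prop :=
  (∀ t, 0 ≤ t → ClassK (fun r => β r t)) ∧
  ∀ r, 0 < r → ContinuousOn (β r) (Ici 0) ∧ AntitoneOn (β r) (Ici 0) ∧
    Tendsto (β r) atTop (nhds 0)

/-- Right-hand lower Dini derivative. -/
noncomputable def dini (f : ℝ → ℝ) (t : ℝ) : ℝ :=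
  liminf (fun τ => (f (t + τ) - f t) / τ) (nhdsWithin 0 (Ioi 0))

section Aux
open Filter Set intervalIntegral


/-- From a (possibly junk-valued real) liminf bound by a negative number,
extract frequent small difference quotients. -/
lemma freq_of_dini_le {y : ℝ → ℝ} {t c : ℝ} (hc : c < 0) (h : dini y t ≤ c)
    {ε : ℝ} (hε : 0 < ε) :
    ∃ᶠ τ in nhdsWithin (0:ℝ) (Ioi 0), (y (t + τ) - y t) / τ < c + ε := by
  by_contra hcon
  rw [Filter.not_frequently] at hcon
  simp only [not_lt] at hcon
  have hmem : c + ε ∈ {a | ∀ᶠ τ in nhdsWithin (0:ℝ) (Ioi 0), a ≤ (y (t + τ) - y t) / τ} := hcon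
  rw [dini, Filter.liminf_eq] at h
  by_cases hb : BddAbove {a | ∀ᶠ τ in nhdsWithin (0:ℝ) (Ioi 0), a ≤ (y (t + τ) - y t) / τ}
  · have := le_csSup hb hmem
    linarith [le_trans this h]
  · rw [Real.sSup_of_not_bddAbove hb] at h
    linarith

/-- Core comparison lemma via sup argument. -/
lemma key_comparison {w : ℝ → ℝ} {a b : ℝ} (hab : a ≤ b)
    (hw : ContinuousOn w (Icc a b))
    (h : ∀ t ∈ Ico a b, ∀ ε : ℝ, 0 < ε →
      ∃ᶠ τ in nhdsWithin (0:ℝ) (Ioi 0), w (t + τ) ≤ w t + ε * τ) :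
    w b ≤ w a := by
  have main : ∀ ε : ℝ, 0 < ε → w b ≤ w a + ε * (b - a) := by
    intro ε hε
    set A : Set ℝ := {t ∈ Icc a b | w t ≤ w a + ε * (t - a)} with hA
    have haA : a ∈ A := ⟨⟨le_refl a, hab⟩, by simp⟩
    have hAne : A.Nonempty := ⟨a, haA⟩
    have hAbdd : BddAbove A := ⟨b, fun t ht => ht.1.2⟩
    set S := sSup A with hS
    have hSmem : S ∈ A := by
      obtain ⟨u, -, hu2, hu3⟩ := exists_seq_tendsto_sSup hAne hAbdd
      have hSicc : S ∈ Icc a b := ⟨le_csSup hAbdd haA, csSup_le hAne (fun t ht => ht.1.2)⟩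
      have htend : Tendsto (fun n => w (u n)) atTop (nhds (w S)) := by
        have := (hw S hSicc).tendsto
        exact this.comp (tendsto_nhdsWithin_of_tendsto_nhds_of_eventually_within u hu2
          (Filter.Eventually.of_forall (fun n => (hu3 n).1)))
      constructor
      · exact hSicc
      · have hle : ∀ n, w (u n) ≤ w a + ε * (u n - a) := fun n => (hu3 n).2
        have h2 : Tendsto (fun n => w a + ε * (u n - a)) atTop (nhds (w a + ε * (S - a))) := by
          exact (tendsto_const_nhds.add (((hu2.sub_const a).const_mul ε)))
        exact le_of_tendsto_of_tendsto' htend h2 hle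
    rcases lt_or_eq_of_le hSmem.1.2 with hlt | heq
    · exfalso
      have hev : ∀ᶠ τ in nhdsWithin (0:ℝ) (Ioi 0), τ < b - S ∧ τ ∈ Ioi (0:ℝ) :=
        (eventually_nhdsWithin_of_eventually_nhds
          (Filter.Tendsto.eventually_lt_const (by linarith : (0:ℝ) < b - S) tendsto_id)).and
          self_mem_nhdsWithin
      obtain ⟨τ, hτ1, hτ2, hτ3⟩ := ((h S ⟨hSmem.1.1, hlt⟩ ε hε).and_eventually hev).exists
      have hmemA : S + τ ∈ A := by
        refine ⟨⟨le_trans hSmem.1.1 (by linarith [mem_Ioi.mp hτ3]), by linarith⟩, ?_⟩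
        have := hSmem.2
        nlinarith [mem_Ioi.mp hτ3]
      have := le_csSup hAbdd hmemA
      have h0τ := mem_Ioi.mp hτ3
      simp only [← hS] at this
      linarith
    · rw [heq] at hSmem; exact hSmem.2
  have htend : Tendsto (fun ε : ℝ => w a + ε * (b - a)) (nhdsWithin 0 (Ioi 0)) (nhds (w a)) := by
    have : Tendsto (fun ε : ℝ => w a + ε * (b - a)) (nhds 0) (nhds (w a + 0 * (b-a))) := by
      exact (tendsto_const_nhds.add ((continuous_id.mul continuous_const).tendsto 0))
    simpa using this.mono_left nhdsWithin_le_nhds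
  exact ge_of_tendsto htend (eventually_nhdsWithin_of_forall (fun ε hε => main ε hε))

open Filter Set intervalIntegral

section Eta
variable (α : ℝ → ℝ)

/-- Modified rate function, `≤ α` and `≤ id`, continuous positive on `(0,∞)`. -/
noncomputable def Amod : ℝ → ℝ := fun u => min (α u) u

noncomputable def eta : ℝ → ℝ := fun x => ∫ u in (1:ℝ)..x, (Amod α u)⁻¹

noncomputable def etaInv : ℝ → ℝ := fun z => sSup {x : ℝ | 0 < x ∧ eta α x ≤ z}

variable {α}
variable (hc : ContinuousOn α (Ici 0)) (hpos : ∀ r : ℝ, 0 < r → 0 < α r)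

include hpos in
lemma Amod_pos {u : ℝ} (hu : 0 < u) : 0 < Amod α u := lt_min (hpos u hu) hu

include hc in
lemma Amod_cont : ContinuousOn (Amod α) (Ioi 0) :=
  ContinuousOn.inf (hc.mono Ioi_subset_Ici_self) continuousOn_id

include hc hpos

lemma Amod_inv_cont : ContinuousOn (fun u => (Amod α u)⁻¹) (Ioi 0) :=
  (Amod_cont hc).inv₀ (fun u hu => ne_of_gt (Amod_pos hpos hu))

lemma Amod_integrable {p q : ℝ} (hp : 0 < p) (hq : 0 < q) :
    IntervalIntegrable (fun u => (Amod α u)⁻¹) MeasureTheory.volume p q := by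
  refine ((Amod_inv_cont hc hpos).mono ?_).intervalIntegrable
  intro x hx
  rw [Set.mem_uIcc] at hx
  rcases hx with ⟨h1, _⟩ | ⟨h1, _⟩
  · exact lt_of_lt_of_le hp h1
  · exact lt_of_lt_of_le hq h1

lemma eta_sub {p q : ℝ} (hp : 0 < p) (hq : 0 < q) :
    eta α q - eta α p = ∫ u in p..q, (Amod α u)⁻¹ := by
  have h := intervalIntegral.integral_add_adjacent_intervals
    (Amod_integrable hc hpos one_pos hp) (Amod_integrable hc hpos hp hq)
  simp only [eta]
  linarith

lemma eta_strictMono : StrictMonoOn (eta α) (Ioi 0) := by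
  intro p hp q hq hpq
  have h1 : 0 < ∫ u in p..q, (Amod α u)⁻¹ :=
    intervalIntegral.intervalIntegral_pos_of_pos_on (Amod_integrable hc hpos hp hq)
      (fun x hx => inv_pos.mpr (Amod_pos hpos (lt_trans hp hx.1))) hpq
  have h2 := eta_sub hc hpos (mem_Ioi.mp hp) (mem_Ioi.mp hq)
  linarith

lemma eta_mono : MonotoneOn (eta α) (Ioi 0) := (eta_strictMono hc hpos).monotoneOn

lemma eta_hasDeriv {x : ℝ} (hx : 0 < x) :
    HasDerivAt (eta α) ((Amod α x)⁻¹) x :=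
  intervalIntegral.integral_hasDerivAt_right (Amod_integrable hc hpos one_pos hx)
    ((Amod_inv_cont hc hpos).stronglyMeasurableAtFilter isOpen_Ioi x hx)
    ((Amod_inv_cont hc hpos).continuousAt (isOpen_Ioi.mem_nhds hx))

lemma eta_continuousAt {x : ℝ} (hx : 0 < x) : ContinuousAt (eta α) x :=
  (eta_hasDeriv hc hpos hx).continuousAt

lemma eta_le_log {s : ℝ} (hs0 : 0 < s) (hs1 : s ≤ 1) : eta α s ≤ Real.log s := by
  have h1 : eta α s - eta α 1 = ∫ u in (1:ℝ)..s, (Amod α u)⁻¹ := eta_sub hc hpos one_pos hs0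
  have h2 : eta α 1 = 0 := by simp [eta]
  have h3 : ∫ u in s..(1:ℝ), u⁻¹ ≤ ∫ u in s..(1:ℝ), (Amod α u)⁻¹ := by
    refine intervalIntegral.integral_mono_on hs1 ?_ (Amod_integrable hc hpos hs0 one_pos) ?_
    · refine ContinuousOn.intervalIntegrable (continuousOn_inv₀.mono ?_)
      intro x hx
      rw [uIcc_of_le hs1] at hx
      exact ne_of_gt (lt_of_lt_of_le hs0 hx.1)
    · intro x hx
      have hx0 : 0 < x := lt_of_lt_of_le hs0 hx.1
      exact inv_anti₀ (Amod_pos hpos hx0) (min_le_right _ _)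
  have h4 : ∫ u in s..(1:ℝ), u⁻¹ = Real.log (1 / s) := by
    refine integral_inv ?_
    rw [uIcc_of_le hs1]
    intro h
    exact absurd h.1 (not_le.mpr hs0)
  have h5 : ∫ u in s..(1:ℝ), (Amod α u)⁻¹ = - ∫ u in (1:ℝ)..s, (Amod α u)⁻¹ :=
    integral_symm 1 s
  rw [h4, Real.log_div one_ne_zero (ne_of_gt hs0), Real.log_one, h5] at h3
  linarith

/-- `eta` attains arbitrarily negative values. -/
lemma eta_exists_small (z : ℝ) : ∃ x : ℝ, 0 < x ∧ x ≤ 1 ∧ eta α x ≤ z := by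
  refine ⟨min (Real.exp z) 1, lt_min (Real.exp_pos z) one_pos, min_le_right _ _, ?_⟩
  refine le_trans (eta_le_log hc hpos (lt_min (Real.exp_pos z) one_pos) (min_le_right _ _)) ?_
  calc Real.log (min (Real.exp z) 1) ≤ Real.log (Real.exp z) :=
        Real.log_le_log (lt_min (Real.exp_pos z) one_pos) (min_le_left _ _)
    _ = z := Real.log_exp z

end Eta

section EtaInv
open Filter Set intervalIntegral
variable {α : ℝ → ℝ}
variable (hc : ContinuousOn α (Ici 0)) (hpos : ∀ r : ℝ, 0 < r → 0 < α r)
include hc hpos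

lemma setS_nonempty (z : ℝ) : {x : ℝ | 0 < x ∧ eta α x ≤ z}.Nonempty := by
  obtain ⟨x, hx1, _, hx3⟩ := eta_exists_small hc hpos z
  exact ⟨x, hx1, hx3⟩

lemma setS_bddAbove {z R : ℝ} (hR : 0 < R) (hz : z ≤ eta α R) :
    BddAbove {x : ℝ | 0 < x ∧ eta α x ≤ z} := by
  refine ⟨R, fun x hx => ?_⟩
  by_contra hxR
  push_neg at hxR
  exact absurd (le_trans hx.2 hz) (not_le.mpr (eta_strictMono hc hpos hR hx.1 hxR))

lemma etaInv_pos {z R : ℝ} (hR : 0 < R) (hz : z ≤ eta α R) : 0 < etaInv α z := by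
  obtain ⟨x, hx⟩ := setS_nonempty hc hpos z
  exact lt_of_lt_of_le hx.1 (le_csSup (setS_bddAbove hc hpos hR hz) hx)

lemma etaInv_le {z R : ℝ} (hR : 0 < R) (hz : z ≤ eta α R) : etaInv α z ≤ R := by
  refine csSup_le (setS_nonempty hc hpos z) (fun x hx => ?_)
  by_contra hxR
  push_neg at hxR
  exact absurd (le_trans hx.2 hz) (not_le.mpr (eta_strictMono hc hpos hR hx.1 hxR))

lemma le_etaInv {z x : ℝ} {R : ℝ} (hR : 0 < R) (hz : z ≤ eta α R)
    (hx : 0 < x) (hxz : eta α x ≤ z) : x ≤ etaInv α z :=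
  le_csSup (setS_bddAbove hc hpos hR hz) ⟨hx, hxz⟩

lemma eta_etaInv {z R : ℝ} (hR : 0 < R) (hz : z ≤ eta α R) :
    eta α (etaInv α z) = z := by
  set m := etaInv α z with hm
  have hm0 : 0 < m := etaInv_pos hc hpos hR hz
  have hle : eta α m ≤ z := by
    by_contra hgt
    push_neg at hgt
    have hmem : {x : ℝ | eta α x ∈ Ioi z} ∈ nhds m :=
      (eta_continuousAt hc hpos hm0).preimage_mem_nhds (Ioi_mem_nhds hgt)
    obtain ⟨δ, hδ0, hδ⟩ := Metric.mem_nhds_iff.mp hmem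
    have hub : m - δ/2 ∈ upperBounds {x : ℝ | 0 < x ∧ eta α x ≤ z} := by
      intro x hx
      by_contra hxm
      push_neg at hxm
      have hxle : x ≤ m := le_csSup (setS_bddAbove hc hpos hR hz) hx
      have : x ∈ Metric.ball m δ := by
        rw [Metric.mem_ball, Real.dist_eq, abs_sub_lt_iff]
        constructor <;> linarith
      exact absurd hx.2 (not_le.mpr (hδ this))
    have h2 : etaInv α z ≤ m - δ/2 := csSup_le (setS_nonempty hc hpos z) hub
    rw [← hm] at h2
    linarith
  have hge : z ≤ eta α m := by
    by_contra hlt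
    push_neg at hlt
    have hmem : {x : ℝ | eta α x ∈ Iio z} ∈ nhds m :=
      (eta_continuousAt hc hpos hm0).preimage_mem_nhds (Iio_mem_nhds hlt)
    obtain ⟨δ, hδ0, hδ⟩ := Metric.mem_nhds_iff.mp hmem
    have hx' : m + δ/2 ∈ {x : ℝ | 0 < x ∧ eta α x ≤ z} := by
      refine ⟨by linarith, le_of_lt (hδ ?_)⟩
      rw [Metric.mem_ball, Real.dist_eq, abs_sub_lt_iff]
      constructor <;> linarith
    have h2 : m + δ/2 ≤ etaInv α z := le_csSup (setS_bddAbove hc hpos hR hz) hx'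
    rw [← hm] at h2
    linarith
  linarith

lemma etaInv_eta {r : ℝ} (hr : 0 < r) : etaInv α (eta α r) = r :=
  le_antisymm (etaInv_le hc hpos hr le_rfl)
    (le_csSup (setS_bddAbove hc hpos hr le_rfl) ⟨hr, le_rfl⟩)

lemma etaInv_mono {z z' R : ℝ} (hzz : z ≤ z') (hR : 0 < R) (hz' : z' ≤ eta α R) :
    etaInv α z ≤ etaInv α z' :=
  csSup_le_csSup (setS_bddAbove hc hpos hR hz') (setS_nonempty hc hpos z)
    (fun x hx => ⟨hx.1, le_trans hx.2 hzz⟩)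

lemma etaInv_continuousAt {z : ℝ} (hz : ∃ R, 0 < R ∧ z < eta α R) :
    ContinuousAt (etaInv α) z := by
  obtain ⟨R, hR0, hzR⟩ := hz
  set m := etaInv α z with hm
  have hm0 : 0 < m := etaInv_pos hc hpos hR0 (le_of_lt hzR)
  have hem : eta α m = z := eta_etaInv hc hpos hR0 (le_of_lt hzR)
  rw [Metric.continuousAt_iff]
  intro ε hε
  set ε' := min (ε/2) (m/2) with hε'
  have hε'0 : 0 < ε' := lt_min (by linarith) (by linarith)
  have hε'm : ε' < m := lt_of_le_of_lt (min_le_right _ _) (by linarith)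
  have h1 : eta α (m - ε') < z := by
    rw [← hem]
    exact eta_strictMono hc hpos (by simp; linarith) (mem_Ioi.mpr hm0) (by linarith)
  have h2 : z < eta α (m + ε') := by
    rw [← hem]
    exact eta_strictMono hc hpos (mem_Ioi.mpr hm0) (by simp; linarith) (by linarith)
  obtain ⟨δ, hδ0, hδ⟩ := Metric.mem_nhds_iff.mp (Ioo_mem_nhds h1 h2)
  refine ⟨δ, hδ0, fun {z'} hz' => ?_⟩
  have hz'U : z' ∈ Ioo (eta α (m - ε')) (eta α (m + ε')) := hδ (by simpa [Metric.mem_ball] using hz')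
  have hR' : 0 < m + ε' := by linarith
  have hz'le : z' ≤ eta α (m + ε') := le_of_lt hz'U.2
  set m' := etaInv α z' with hm'
  have hm'0 : 0 < m' := etaInv_pos hc hpos hR' hz'le
  have hem' : eta α m' = z' := eta_etaInv hc hpos hR' hz'le
  have hgt : m - ε' < m' := by
    by_contra hle
    push_neg at hle
    have := eta_mono hc hpos (mem_Ioi.mpr hm'0) (by simp; linarith : m - ε' ∈ Ioi (0:ℝ)) hle
    rw [hem'] at this
    linarith [hz'U.1]
  have hlt : m' < m + ε' := by
    by_contra hle
    push_neg at hle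
    have := eta_mono hc hpos (by simp; linarith : m + ε' ∈ Ioi (0:ℝ)) (mem_Ioi.mpr hm'0) hle
    rw [hem'] at this
    linarith [hz'U.2]
  rw [Real.dist_eq, abs_sub_lt_iff]
  have : ε' ≤ ε/2 := min_le_left _ _
  constructor <;> linarith

end EtaInv

section Dyn
open Filter Set intervalIntegral

/-- The supremum of a closed sublevel-type set is in the set. -/
lemma csSup_mem_le {w g : ℝ → ℝ} {a b : ℝ} (hab : a ≤ b)
    (hw : ContinuousOn w (Icc a b)) (hg : Continuous g) (ha : w a ≤ g a) :
    sSup {t ∈ Icc a b | w t ≤ g t} ∈ {t ∈ Icc a b | w t ≤ g t} := by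
  set A : Set ℝ := {t ∈ Icc a b | w t ≤ g t} with hA
  have haA : a ∈ A := ⟨⟨le_refl a, hab⟩, ha⟩
  have hAne : A.Nonempty := ⟨a, haA⟩
  have hAbdd : BddAbove A := ⟨b, fun t ht => ht.1.2⟩
  obtain ⟨u, -, hu2, hu3⟩ := exists_seq_tendsto_sSup hAne hAbdd
  have hSicc : sSup A ∈ Icc a b := ⟨le_csSup hAbdd haA, csSup_le hAne (fun t ht => ht.1.2)⟩
  refine ⟨hSicc, ?_⟩
  have htend : Tendsto (fun n => w (u n)) atTop (nhds (w (sSup A))) :=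
    (hw (sSup A) hSicc).tendsto.comp
      (tendsto_nhdsWithin_of_tendsto_nhds_of_eventually_within u hu2
        (Filter.Eventually.of_forall (fun n => (hu3 n).1)))
  have htend2 : Tendsto (fun n => g (u n)) atTop (nhds (g (sSup A))) :=
    (hg.continuousAt.tendsto).comp hu2
  exact le_of_tendsto_of_tendsto' htend htend2 (fun n => (hu3 n).2)

variable {α : ℝ → ℝ}
variable (hc : ContinuousOn α (Ici 0)) (hnn : ∀ r : ℝ, 0 ≤ r → 0 ≤ α r)
  (hpos : ∀ r : ℝ, 0 < r → 0 < α r)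
variable {y : ℝ → ℝ} (hy : ContinuousOn y (Ici 0)) (hynn : ∀ t : ℝ, 0 ≤ t → 0 ≤ y t)
  (hd : ∀ t : ℝ, 0 < t → dini y t ≤ -α (y t))

include hc hnn hpos hy hynn hd

lemma y_antitone : ∀ a b : ℝ, 0 ≤ a → a ≤ b → y b ≤ y a := by
  have main : ∀ a b : ℝ, 0 < a → a ≤ b → y b ≤ y a := by
    intro a b ha hab
    by_contra hcon
    push_neg at hcon
    set c := (y a + y b) / 2 with hcdef
    have hya : 0 ≤ y a := hynn a (le_of_lt ha)
    have hc1 : y a < c := by simp only [hcdef]; linarith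
    have hc2 : c < y b := by simp only [hcdef]; linarith
    have hc0 : 0 < c := by linarith
    have hS := csSup_mem_le hab (hy.mono (fun t ht => le_trans (le_of_lt ha) ht.1))
      continuous_const (le_of_lt hc1)
    set S := sSup {t ∈ Icc a b | y t ≤ c} with hSdef
    have hSb : S < b := by
      rcases lt_or_eq_of_le hS.1.2 with h | h
      · exact h
      · rw [h] at hS; exact absurd hS.2 (not_le.mpr hc2)
    have hgt : ∀ t ∈ Ioc S b, c < y t := by
      intro t ht
      by_contra hle
      push_neg at hle
      have : t ≤ S := le_csSup ⟨b, fun s hs => hs.1.2⟩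
        ⟨⟨le_trans hS.1.1 (le_of_lt ht.1), ht.2⟩, hle⟩
      exact absurd ht.1 (not_lt.mpr this)
    have hySc : y S = c := by
      refine le_antisymm hS.2 ?_
      have htend : Tendsto y (nhdsWithin S (Ioc S b)) (nhds (y S)) := by
        refine Filter.Tendsto.mono_left ((hy.mono ?_) S hS.1).tendsto ?_
        · exact fun t ht => le_trans (le_of_lt ha) ht.1
        · exact nhdsWithin_mono S (fun t ht => ⟨le_trans hS.1.1 (le_of_lt ht.1), ht.2⟩)
      have hnb : (nhdsWithin S (Ioc S b)).NeBot := by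
        rw [nhdsWithin_Ioc_eq_nhdsGT hSb]; infer_instance
      refine ge_of_tendsto htend ?_
      exact eventually_nhdsWithin_of_forall (fun t ht => le_of_lt (hgt t ht))
    have hkey : y b ≤ y S := by
      refine key_comparison (le_of_lt hSb) (hy.mono (fun t ht =>
        le_trans (le_trans (le_of_lt ha) hS.1.1) ht.1)) ?_
      intro t ht ε hε
      have hyt : c ≤ y t := by
        rcases eq_or_lt_of_le ht.1 with h | h
        · rw [← h, hySc]
        · exact le_of_lt (hgt t ⟨h, le_of_lt ht.2⟩)
      have hyt0 : 0 < y t := lt_of_lt_of_le hc0 hyt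
      have ht0 : 0 < t := lt_of_lt_of_le (lt_of_lt_of_le ha hS.1.1) ht.1
      have hα : 0 < α (y t) := hpos _ hyt0
      have hfreq := freq_of_dini_le (neg_neg_iff_pos.mpr hα) (hd t ht0) hε
      refine (hfreq.and_eventually self_mem_nhdsWithin).mono ?_
      rintro τ ⟨h1, h2⟩
      have hτ0 : 0 < τ := mem_Ioi.mp h2
      rw [div_lt_iff₀ hτ0] at h1
      nlinarith
    rw [hySc] at hkey
    exact absurd hkey (not_le.mpr hc2)
  intro a b ha hab
  rcases eq_or_lt_of_le ha with h | h
  · rcases eq_or_lt_of_le hab with h2 | h2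
    · rw [h2]
    · rw [← h] at h2 ⊢
      have hev : ∀ᶠ a' in nhdsWithin 0 (Ioc 0 b), y b ≤ y a' := by
        exact eventually_nhdsWithin_of_forall (fun a' ha' => main a' b ha'.1 ha'.2)
      have htend : Tendsto y (nhdsWithin 0 (Ioc (0:ℝ) b)) (nhds (y 0)) :=
        ((hy 0 Set.self_mem_Ici).tendsto).mono_left
          (nhdsWithin_mono 0 (fun t ht => le_of_lt ht.1))
      have : (nhdsWithin (0:ℝ) (Ioc 0 b)).NeBot := by
        rw [nhdsWithin_Ioc_eq_nhdsGT h2]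
        infer_instance
      exact ge_of_tendsto htend hev
  · exact main a b h hab

end Dyn

section Decay
open Filter Set intervalIntegral

variable {α : ℝ → ℝ}
variable (hc : ContinuousOn α (Ici 0)) (hpos : ∀ r : ℝ, 0 < r → 0 < α r)
variable {y : ℝ → ℝ} (hy : ContinuousOn y (Ici 0))
  (hd : ∀ t : ℝ, 0 < t → dini y t ≤ -α (y t))

include hc hpos hy hd

lemma eta_decay {a b : ℝ} (ha : 0 < a) (hab : a ≤ b)
    (hypos : ∀ t ∈ Icc a b, 0 < y t) :
    eta α (y b) + b ≤ eta α (y a) + a := by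
  refine key_comparison (w := fun t => eta α (y t) + t) hab ?_ ?_
  · refine ContinuousOn.add ?_ continuousOn_id
    intro t ht
    exact (eta_continuousAt hc hpos (hypos t ht)).comp_continuousWithinAt
      ((hy.mono (fun s hs => le_trans (le_of_lt ha) hs.1)) t ht)
  · intro t ht ε hε
    have main : ∀ ε' : ℝ, 0 < ε' → ε' ≤ 1/2 →
        ∃ᶠ τ in nhdsWithin (0:ℝ) (Ioi 0),
          eta α (y (t + τ)) + (t + τ) ≤ eta α (y t) + t + ε' * τ := by
      intro ε' hε'0 hε'half
      set p := y t with hp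
      have hp0 : 0 < p := hypos t ⟨ht.1, le_of_lt ht.2⟩
      set ap := α p with hap
      have hap0 : 0 < ap := hpos p hp0
      set ε₁ := ε' * ap / 4 with hε₁
      have hε₁0 : 0 < ε₁ := by positivity
      have hε₁ap : ε₁ < ap := by nlinarith
      have hAc : ContinuousAt (Amod α) p := (Amod_cont hc).continuousAt (isOpen_Ioi.mem_nhds hp0)
      have hAp : Amod α p < ap + ε₁ := lt_of_le_of_lt (min_le_left _ _) (by linarith)
      obtain ⟨δ₁, hδ₁0, hδ₁⟩ := Metric.mem_nhds_iff.mp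
        (hAc.preimage_mem_nhds (Iio_mem_nhds hAp))
      have ht0 : 0 < t := lt_of_lt_of_le ha ht.1
      have hfreq := freq_of_dini_le (neg_neg_iff_pos.mpr hap0) (hd t ht0) hε₁0
      have hev : ∀ᶠ τ in nhdsWithin (0:ℝ) (Ioi 0),
          τ ∈ Ioi (0:ℝ) ∧ τ < b - t ∧ τ * ap < min δ₁ (p/2) := by
        refine Filter.Eventually.and ?_ (Filter.Eventually.and ?_ ?_)
        · exact eventually_mem_nhdsWithin
        · exact eventually_nhdsWithin_of_eventually_nhds
            (Filter.Tendsto.eventually_lt_const (by linarith [ht.2] : (0:ℝ) < b - t) tendsto_id)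
        · refine eventually_nhdsWithin_of_eventually_nhds ?_
          have htd : Tendsto (fun τ : ℝ => τ * ap) (nhds 0) (nhds 0) := by
            simpa using (tendsto_id.mul_const ap : Tendsto (fun τ : ℝ => id τ * ap) (nhds 0) (nhds (0 * ap)))
          exact Filter.Tendsto.eventually_lt_const (lt_min hδ₁0 (by linarith)) htd
      refine (hfreq.and_eventually hev).mono ?_
      rintro τ ⟨hq, hτ0', hτb, hτs⟩
      have hτ0 : 0 < τ := mem_Ioi.mp hτ0'
      set h := τ * (ap - ε₁) with hh
      have hh0 : 0 < h := mul_pos hτ0 (by linarith)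
      have hhap : h ≤ τ * ap := by nlinarith
      have hhδ : h < δ₁ := lt_of_le_of_lt hhap (lt_of_lt_of_le hτs (min_le_left _ _))
      have hhp : h < p / 2 := lt_of_le_of_lt hhap (lt_of_lt_of_le hτs (min_le_right _ _))
      have hph0 : 0 < p - h := by linarith
      rw [div_lt_iff₀ hτ0] at hq
      have hyτ : y (t + τ) ≤ p - h := by nlinarith
      have htτ : t + τ ∈ Icc a b := ⟨by linarith [ht.1], by linarith⟩
      have hyτ0 : 0 < y (t + τ) := hypos _ htτ
      have step1 : eta α (y (t + τ)) ≤ eta α (p - h) :=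
        eta_mono hc hpos (mem_Ioi.mpr hyτ0) (mem_Ioi.mpr hph0) hyτ
      have step2 : eta α p - eta α (p - h) = ∫ u in (p-h)..p, (Amod α u)⁻¹ :=
        eta_sub hc hpos hph0 hp0
      have hsub : Icc (p - h) p ⊆ Metric.ball p δ₁ := by
        intro x hx
        rw [Metric.mem_ball, Real.dist_eq, abs_sub_lt_iff]
        constructor <;> [linarith [hx.2]; linarith [hx.1]]
      have step3 : h * (ap + ε₁)⁻¹ ≤ ∫ u in (p-h)..p, (Amod α u)⁻¹ := by
        have hmono := integral_mono_on (by linarith : p - h ≤ p)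
          (_root_.intervalIntegrable_const (c := (ap + ε₁)⁻¹))
          (Amod_integrable hc hpos hph0 hp0)
          (fun x hx => inv_anti₀ (Amod_pos hpos (lt_of_lt_of_le hph0 hx.1))
            (le_of_lt (hδ₁ (hsub hx))))
        rwa [integral_const, smul_eq_mul, show p - (p - h) = h by ring] at hmono
      have step4 : (1 - ε') * τ ≤ h * (ap + ε₁)⁻¹ := by
        have hkey : (1 - ε') * τ * (ap + ε₁) ≤ h := by
          rw [hh, hε₁]
          nlinarith [mul_pos hτ0 hap0, sq_nonneg ε', mul_nonneg (mul_nonneg (le_of_lt hτ0) (le_of_lt hap0)) (mul_nonneg (le_of_lt hε'0) (le_of_lt hε'0))]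
        have hinv : 0 < (ap + ε₁)⁻¹ := inv_pos.mpr (by linarith)
        calc (1 - ε') * τ = ((1 - ε') * τ * (ap + ε₁)) * (ap + ε₁)⁻¹ := by
              rw [mul_assoc, mul_inv_cancel₀ (by linarith : ap + ε₁ ≠ 0), mul_one]
          _ ≤ h * (ap + ε₁)⁻¹ := mul_le_mul_of_nonneg_right hkey (le_of_lt hinv)
      have hfin : eta α (y (t + τ)) ≤ eta α p - (1 - ε') * τ := by linarith
      show eta α (y (t + τ)) + (t + τ) ≤ eta α (y t) + t + ε' * τ
      rw [← hp]
      linarith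
    obtain ⟨ε', hε'1, hε'2, hε'3⟩ :
        ∃ ε' : ℝ, 0 < ε' ∧ ε' ≤ 1/2 ∧ ε' ≤ ε :=
      ⟨min ε (1/2), lt_min hε (by norm_num), min_le_right _ _, min_le_left _ _⟩
    refine (main ε' hε'1 hε'2).mp (eventually_nhdsWithin_of_forall (fun τ hτ h1 => ?_))
    have h2 : ε' * τ ≤ ε * τ := mul_le_mul_of_nonneg_right hε'3 (le_of_lt (mem_Ioi.mp hτ))
    show eta α (y (t + τ)) + (t + τ) ≤ eta α (y t) + t + ε * τ
    linarith

end Decay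

end Aux

open Filter Set in
/-- Generalized comparison principle: for continuous positive definite `α`
there is `β ∈ KL` bounding every continuous nonnegative function whose Dini
derivative satisfies `D₊y(t) ≤ -α(y(t))`. -/
theorem comparison_principle (α : ℝ → ℝ)
    (hc : ContinuousOn α (Ici 0)) (h0 : α 0 = 0)
    (hnn : ∀ r : ℝ, 0 ≤ r → 0 ≤ α r) (hpos : ∀ r : ℝ, 0 < r → 0 < α r) :
    ∃ β : ℝ → ℝ → ℝ, ClassKL β ∧
      ∀ y : ℝ → ℝ, ContinuousOn y (Ici 0) → (∀ t : ℝ, 0 ≤ t → 0 ≤ y t) →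
        (∀ t : ℝ, 0 < t → dini y t ≤ -α (y t)) →
        ∀ t : ℝ, 0 ≤ t → y t ≤ β (y 0) t := by
  classical
  set β : ℝ → ℝ → ℝ := fun r t => if r ≤ 0 then 0 else etaInv α (eta α r - t) with hβ
  have hβ0 : ∀ t, β 0 t = 0 := fun t => if_pos le_rfl
  have hβval : ∀ r t, 0 < r → β r t = etaInv α (eta α r - t) :=
    fun r t hr => if_neg (not_le.mpr hr)
  -- basic facts for r > 0, t ≥ 0
  have hzle : ∀ r t : ℝ, 0 ≤ t → eta α r - t ≤ eta α r := fun r t ht => by linarith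
  have hβpos : ∀ r t : ℝ, 0 < r → 0 ≤ t → 0 < β r t := by
    intro r t hr ht
    rw [hβval r t hr]
    exact etaInv_pos hc hpos hr (hzle r t ht)
  have hβler : ∀ r t : ℝ, 0 < r → 0 ≤ t → β r t ≤ r := by
    intro r t hr ht
    rw [hβval r t hr]
    exact etaInv_le hc hpos hr (hzle r t ht)
  have hetaβ : ∀ r t : ℝ, 0 < r → 0 ≤ t → eta α (β r t) = eta α r - t := by
    intro r t hr ht
    rw [hβval r t hr]
    exact eta_etaInv hc hpos hr (hzle r t ht)
  refine ⟨β, ⟨?_, ?_⟩, ?_⟩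
  · -- ClassK in r for each t ≥ 0
    intro t ht
    refine ⟨?_, ?_, hβ0 t, ?_⟩
    · -- continuity in r
      intro r hr
      rcases eq_or_lt_of_le (mem_Ici.mp hr) with h | h
      · -- at r = 0: squeeze
        rw [← h]
        have hb : ∀ r' ∈ Ici (0:ℝ), β r' t ≤ r' := by
          intro r' hr'
          rcases eq_or_lt_of_le (mem_Ici.mp hr') with h' | h'
          · rw [← h', hβ0 t]
          · exact hβler r' t h' ht
        have hb0 : ∀ r' ∈ Ici (0:ℝ), 0 ≤ β r' t := by
          intro r' hr'
          rcases eq_or_lt_of_le (mem_Ici.mp hr') with h' | h'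
          · rw [← h', hβ0 t]
          · exact le_of_lt (hβpos r' t h' ht)
        have : Tendsto (fun r' => β r' t) (nhdsWithin 0 (Ici 0)) (nhds 0) := by
          refine tendsto_of_tendsto_of_tendsto_of_le_of_le' tendsto_const_nhds
            (tendsto_id.mono_left nhdsWithin_le_nhds) ?_ ?_
          · exact eventually_nhdsWithin_of_forall hb0
          · exact eventually_nhdsWithin_of_forall hb
        have hgoal : Tendsto (fun r' => β r' t) (nhdsWithin 0 (Ici 0)) (nhds (β 0 t)) := by
          rw [hβ0 t]; exact this
        exact hgoal
      · -- at r > 0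
        refine ContinuousAt.continuousWithinAt ?_
        have hev : (fun r' => β r' t) =ᶠ[nhds r] (fun r' => etaInv α (eta α r' - t)) := by
          filter_upwards [Ioi_mem_nhds h] with r' hr'
          exact hβval r' t (mem_Ioi.mp hr')
        refine ContinuousAt.congr ?_ hev.symm
        have hinner : ContinuousAt (fun r' => eta α r' - t) r :=
          (eta_continuousAt hc hpos h).sub continuousAt_const
        have houter : ContinuousAt (etaInv α) (eta α r - t) := by
          refine etaInv_continuousAt hc hpos ⟨r + 1, by linarith, ?_⟩
          calc eta α r - t ≤ eta α r := by linarith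
            _ < eta α (r + 1) := eta_strictMono hc hpos (mem_Ioi.mpr h)
                (mem_Ioi.mpr (by linarith)) (by linarith)
        show ContinuousAt ((etaInv α) ∘ (fun r' => eta α r' - t)) r
        refine ContinuousAt.comp ?_ hinner
        exact houter
    · -- strict monotonicity in r
      intro r hr r' hr' hrr'
      rcases eq_or_lt_of_le (mem_Ici.mp hr) with h | h
      · show β r t < β r' t
        have hrt : β r t = 0 := by rw [← h]; exact hβ0 t
        rw [hrt]
        exact hβpos r' t (h ▸ hrr') ht
      · have hr'0 : 0 < r' := lt_trans h hrr'
        by_contra hle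
        push_neg at hle
        have h1 : eta α (β r' t) ≤ eta α (β r t) :=
          eta_mono hc hpos (mem_Ioi.mpr (hβpos r' t hr'0 ht))
            (mem_Ioi.mpr (hβpos r t h ht)) hle
        rw [hetaβ r t h ht, hetaβ r' t hr'0 ht] at h1
        have h2 : eta α r < eta α r' :=
          eta_strictMono hc hpos (mem_Ioi.mpr h) (mem_Ioi.mpr hr'0) hrr'
        linarith
    · -- nonnegativity
      intro r hr
      show 0 ≤ β r t
      rcases eq_or_lt_of_le hr with h | h
      · rw [← h, hβ0 t]
      · exact le_of_lt (hβpos r t h ht)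
  · -- properties in t for r > 0
    intro r hr
    refine ⟨?_, ?_, ?_⟩
    · -- continuity in t
      intro t ht
      refine ContinuousAt.continuousWithinAt ?_
      have hev : (fun t' => β r t') =ᶠ[nhds t] (fun t' => etaInv α (eta α r - t')) :=
        Filter.Eventually.of_forall (fun t' => hβval r t' hr)
      refine ContinuousAt.congr ?_ hev.symm
      have houter : ContinuousAt (etaInv α) (eta α r - t) := by
        refine etaInv_continuousAt hc hpos ⟨r + 1, by linarith, ?_⟩
        calc eta α r - t ≤ eta α r := by linarith [mem_Ici.mp ht]
          _ < eta α (r + 1) := eta_strictMono hc hpos (mem_Ioi.mpr hr)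
              (mem_Ioi.mpr (by linarith)) (by linarith)
      show ContinuousAt ((etaInv α) ∘ (fun t' => eta α r - t')) t
      refine ContinuousAt.comp ?_ (continuousAt_const.sub continuousAt_id)
      exact houter
    · -- antitone in t
      intro t ht t' ht' htt'
      rw [hβval r t hr, hβval r t' hr]
      exact etaInv_mono hc hpos (by linarith) hr (hzle r t (mem_Ici.mp ht))
    · -- tendsto 0 at top
      rw [Metric.tendsto_atTop]
      intro ε hε
      set ε₀ := min (ε/2) r with hε₀
      have hε₀0 : 0 < ε₀ := lt_min (by linarith) hr
      refine ⟨eta α r - eta α ε₀, fun t htN => ?_⟩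
      have h1 : eta α r - t ≤ eta α ε₀ := by linarith
      have h2 : β r t ≤ ε₀ := by
        rw [hβval r t hr]
        exact etaInv_le hc hpos hε₀0 h1
      have h3 : 0 < β r t := by
        rw [hβval r t hr]
        exact etaInv_pos hc hpos hε₀0 h1
      rw [Real.dist_eq, abs_sub_comm, abs_of_nonpos (by linarith)]
      have : ε₀ ≤ ε/2 := min_le_left _ _
      linarith
  · -- the comparison bound
    intro y hy hynn hd t ht
    have hanti := y_antitone hc hnn hpos hy hynn hd
    rcases eq_or_lt_of_le (hynn 0 le_rfl) with h00 | h00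
    · -- y 0 = 0
      have hle : y t ≤ y 0 := hanti 0 t le_rfl ht
      rw [← h00] at hle ⊢
      rw [hβ0 t]
      exact hle
    · -- y 0 > 0
      rcases eq_or_lt_of_le (hynn t ht) with hyt0 | hyt0
      · rw [← hyt0]
        exact le_of_lt (hβpos (y 0) t h00 ht)
      · rcases eq_or_lt_of_le ht with ht0 | ht0
        · -- t = 0
          rw [← ht0, hβval (y 0) 0 h00, sub_zero, etaInv_eta hc hpos h00]
        · -- t > 0
          have hkey : ∀ a ∈ Ioo (0:ℝ) t, eta α (y t) + t ≤ eta α (y 0) + a := by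
            intro a ha
            have hstep : eta α (y t) + t ≤ eta α (y a) + a := by
              refine eta_decay hc hpos hy hd ha.1 (le_of_lt ha.2) ?_
              intro s hs
              exact lt_of_lt_of_le hyt0 (hanti s t (le_trans (le_of_lt ha.1) hs.1) hs.2)
            have hya_le : y a ≤ y 0 := hanti 0 a le_rfl (le_of_lt ha.1)
            have hya0 : 0 < y a := lt_of_lt_of_le hyt0 (hanti a t (le_of_lt ha.1) (le_of_lt ha.2))
            have : eta α (y a) ≤ eta α (y 0) :=
              eta_mono hc hpos (mem_Ioi.mpr hya0) (mem_Ioi.mpr h00) hya_le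
            linarith
          have hlim : eta α (y t) + t ≤ eta α (y 0) := by
            have htend : Tendsto (fun a : ℝ => eta α (y 0) + a) (nhdsWithin 0 (Ioi 0))
                (nhds (eta α (y 0))) := by
              have : Tendsto (fun a : ℝ => eta α (y 0) + a) (nhds 0)
                  (nhds (eta α (y 0) + 0)) :=
                tendsto_const_nhds.add tendsto_id
              rw [add_zero] at this
              exact this.mono_left nhdsWithin_le_nhds
            refine ge_of_tendsto htend ?_
            filter_upwards [eventually_nhdsWithin_of_eventually_nhds
              (Filter.Tendsto.eventually_lt_const ht0 tendsto_id), self_mem_nhdsWithin] with a h1 h2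
            exact hkey a ⟨mem_Ioi.mp h2, h1⟩
          rw [hβval (y 0) t h00]
          exact le_etaInv hc hpos h00 (hzle (y 0) t ht) hyt0 (by linarith)
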